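/- Let d ≥ 1 be an integer and let G be a finite simple graph with maximum degree Δ(G) ≤ 2^{d+1} − 1. Then G can be located on 2^d columns in ℤ^{d+1}. -/

import Mathlib

open SimpleGraph

/-- Cast an integer grid point to a real point. -/
def castPt {d : ℕ} (p : Fin d → ℤ) : Fin d → ℝ := fun i => (p i : ℝ)

/-- The grid points lying on the closed segment in `ℝ^d` joining `a` and `b`. -/
def segGridPts {d : ℕ} (a b : Fin d → ℤ) : Set (Fin d → ℤ) :=
  {p | castPt p ∈ segment ℝ (castPt a) (castPt b)}

/-- `φ` is a grid drawing of `G` in `ℤ^d`: it is injective and no vertex image other than the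
endpoints lies on the closed segment representing an edge. -/
def IsGridDrawing {V : Type*} {d : ℕ} (G : SimpleGraph V) (φ : V → Fin d → ℤ) : Prop :=
  Function.Injective φ ∧
    ∀ u v w : V, G.Adj u v →
      castPt (φ w) ∈ segment ℝ (castPt (φ u)) (castPt (φ v)) → w = u ∨ w = v

/-- `G` is `q`-locatable in `ℤ^d`: it has a grid drawing in which every edge segment contains
at most `q` grid points. -/
def IsQLocatable {V : Type*} (G : SimpleGraph V) (d q : ℕ) : Prop :=
  ∃ φ : V → Fin d → ℤ, IsGridDrawing G φ ∧
    ∀ u v : V, G.Adj u v → (segGridPts (φ u) (φ v)).ncard ≤ q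

/-- A primitive grid drawing: every edge segment contains exactly its two endpoints
as grid points. -/
def IsPrimitiveDrawing {V : Type*} {d : ℕ} (G : SimpleGraph V) (φ : V → Fin d → ℤ) : Prop :=
  IsGridDrawing G φ ∧ ∀ u v : V, G.Adj u v → segGridPts (φ u) (φ v) = {φ u, φ v}

/-- `G` is locatable in `ℤ^d`: it has a primitive grid drawing in `ℤ^d`. -/
def IsLocatable {V : Type*} (G : SimpleGraph V) (d : ℕ) : Prop :=
  ∃ φ : V → Fin d → ℤ, IsPrimitiveDrawing G φ

/-- The rank of a grid point in `ℤ^d`: the tuple of its first `d - 1` coordinates. -/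
def rank {d : ℕ} (p : Fin d → ℤ) : Fin (d - 1) → ℤ :=
  fun i => p (Fin.castLE (Nat.sub_le d 1) i)

/-- `G` is embeddable on `l` columns: it has a grid drawing in `ℤ²` in which the first
coordinates of the vertex images take at most `l` distinct values. -/
def EmbeddableOnCols {V : Type*} (G : SimpleGraph V) (l : ℕ) : Prop :=
  ∃ φ : V → Fin 2 → ℤ, IsGridDrawing G φ ∧ (Set.range fun v => φ v 0).ncard ≤ l

/-- `G` can be located on `l` columns in `ℤ^d`: it has a primitive grid drawing in `ℤ^d`
using at most `l` columns. -/
def LocatableOnCols {V : Type*} (G : SimpleGraph V) (d l : ℕ) : Prop :=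
  ∃ φ : V → Fin d → ℤ, IsPrimitiveDrawing G φ ∧ (Set.range fun v => rank (φ v)).ncard ≤ l

/-- A linear forest: an acyclic graph with maximum degree at most two
(i.e. a disjoint union of paths). -/
def IsLinearForest {W : Type*} (H : SimpleGraph W) : Prop :=
  H.IsAcyclic ∧ ∀ v : W, {w | H.Adj v w}.ncard ≤ 2

lemma castPt_injective {d : ℕ} : Function.Injective (castPt (d := d)) := by
  intro p q h
  funext i
  have := congrFun h i
  simpa [castPt] using this

lemma segGridPts_eq_pair {n : ℕ} (a b : Fin n → ℤ) (i : Fin n)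
    (hi : b i - a i = 1 ∨ b i - a i = -1) :
    segGridPts a b = {a, b} := by
  ext p
  simp only [Set.mem_insert_iff, Set.mem_singleton_iff]
  constructor
  · rintro ⟨s, t, hs, ht, hst, hcomb⟩
    have hcf := congrFun hcomb i
    simp only [castPt, Pi.add_apply, Pi.smul_apply, smul_eq_mul] at hcf
    have hb : (b i : ℝ) = (a i : ℝ) + ((b i - a i : ℤ) : ℝ) := by push_cast; ring
    have hsa : s * (a i:ℝ) + t * (a i:ℝ) = (a i:ℝ) := by rw [← add_mul, hst, one_mul]
    have ht' : t * ((b i - a i : ℤ) : ℝ) = ((p i - a i : ℤ) : ℝ) := by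
      push_cast at hcf ⊢
      nlinarith [hcf, hsa]
    have hkey : t = 0 ∨ t = 1 := by
      rcases hi with h1 | h1
      · rw [h1] at ht'
        have hti : t = ((p i - a i : ℤ) : ℝ) := by push_cast at ht' ⊢; linarith
        have h0 : (0:ℤ) ≤ p i - a i := by exact_mod_cast hti ▸ ht
        have h1' : p i - a i ≤ 1 := by
          have : t ≤ 1 := by linarith
          rw [hti] at this; exact_mod_cast this
        interval_cases h : (p i - a i) <;> simp_all
      · rw [h1] at ht'
        have hti : t = ((a i - p i : ℤ) : ℝ) := by push_cast at ht' ⊢; linarith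
        have h0 : (0:ℤ) ≤ a i - p i := by exact_mod_cast hti ▸ ht
        have h1' : a i - p i ≤ 1 := by
          have : t ≤ 1 := by linarith
          rw [hti] at this; exact_mod_cast this
        interval_cases h : (a i - p i) <;> simp_all
    rcases hkey with h0 | h0
    · left
      apply castPt_injective
      have hs1 : s = 1 := by linarith
      rw [h0, hs1] at hcomb
      simpa using hcomb.symm
    · right
      apply castPt_injective
      have hs1 : s = 0 := by linarith
      rw [h0, hs1] at hcomb
      simpa using hcomb.symm
  · rintro (rfl | rfl)
    · exact left_mem_segment ℝ _ _
    · exact right_mem_segment ℝ _ _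

lemma exists_good_coloring {V : Type*} [Fintype V] (G : SimpleGraph V) [DecidableRel G.Adj]
    (m : ℕ) (hm : 2 ≤ m) (hΔ : ∀ v, G.degree v ≤ 2 * m - 1) :
    ∃ c : V → Fin m, ∀ v, ((G.neighborFinset v).filter (fun w => c w = c v)).card ≤ 1 := by
  classical
  have hmpos : 0 < m := by omega
  have : Nonempty (Fin m) := ⟨⟨0, hmpos⟩⟩
  set F : (V → Fin m) → ℕ :=
    fun c => ∑ w, ((G.neighborFinset w).filter (fun u => c u = c w)).card with hF
  obtain ⟨c, -, hcmin⟩ := Finset.exists_min_image (Finset.univ : Finset (V → Fin m)) F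
    Finset.univ_nonempty
  refine ⟨c, fun v => ?_⟩
  by_contra hbad
  push_neg at hbad
  have hA : 2 ≤ ((G.neighborFinset v).filter (fun w => c w = c v)).card := hbad
  -- find a color j with few neighbors
  have hsum : ∑ j : Fin m, ((G.neighborFinset v).filter (fun w => c w = j)).card
      = G.degree v := by
    rw [← SimpleGraph.card_neighborFinset_eq_degree]
    exact (Finset.card_eq_sum_card_fiberwise (fun w _ => Finset.mem_univ (c w))).symm
  have hj : ∃ j : Fin m, j ≠ c v ∧
      ((G.neighborFinset v).filter (fun w => c w = j)).card ≤ 1 := by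
    by_contra hno
    push_neg at hno
    have hall : ∀ j : Fin m, 2 ≤ ((G.neighborFinset v).filter (fun w => c w = j)).card := by
      intro j
      by_cases hj : j = c v
      · subst hj; exact hA
      · exact hno j hj
    have : 2 * m ≤ ∑ j : Fin m, ((G.neighborFinset v).filter (fun w => c w = j)).card := by
      calc 2 * m = ∑ _j : Fin m, 2 := by simp [mul_comm]
        _ ≤ _ := Finset.sum_le_sum fun j _ => hall j
    have := hΔ v
    omega
  obtain ⟨j, hjne, hjcard⟩ := hj
  set c' : V → Fin m := Function.update c v j with hc'
  -- key counting identity: F c' + 2 * A = F c + 2 * A'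
  set A := ((G.neighborFinset v).filter (fun w => c w = c v)).card with hAdef
  set A' := ((G.neighborFinset v).filter (fun w => c w = j)).card with hA'def
  have key : F c' + 2 * A = F c + 2 * A' := by
    have hvnot : v ∉ G.neighborFinset v := by simp
    -- termwise facts
    have hterm_v : ((G.neighborFinset v).filter (fun u => c' u = c' v)).card = A' := by
      rw [hA'def]
      congr 1
      apply Finset.filter_congr
      intro u hu
      have huv : u ≠ v := by rintro rfl; exact hvnot hu
      simp [hc', Function.update_of_ne huv, Function.update_self]
    have hterm_far : ∀ w, w ≠ v → w ∉ G.neighborFinset v →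
        ((G.neighborFinset w).filter (fun u => c' u = c' w)).card
          = ((G.neighborFinset w).filter (fun u => c u = c w)).card := by
      intro w hwv hwnb
      congr 1
      apply Finset.filter_congr
      intro u hu
      have huv : u ≠ v := by
        rintro rfl
        exact hwnb (by rwa [SimpleGraph.mem_neighborFinset, adj_comm, ← SimpleGraph.mem_neighborFinset] at hu)
      simp [hc', Function.update_of_ne huv, Function.update_of_ne hwv]
    have hterm_nb : ∀ w ∈ G.neighborFinset v,
        ((G.neighborFinset w).filter (fun u => c' u = c' w)).card
          + (if c v = c w then 1 else 0)
        = ((G.neighborFinset w).filter (fun u => c u = c w)).card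
          + (if j = c w then 1 else 0) := by
      intro w hw
      have hwv : w ≠ v := by rintro rfl; exact hvnot hw
      have hvw : v ∈ G.neighborFinset w := by
        rwa [SimpleGraph.mem_neighborFinset, adj_comm, ← SimpleGraph.mem_neighborFinset]
      set T := (G.neighborFinset w).filter (fun u => u ≠ v ∧ c u = c w) with hT
      have hvT : v ∉ T := by simp [hT]
      have hS : (G.neighborFinset w).filter (fun u => c u = c w)
          = if c v = c w then insert v T else T := by
        ext u
        by_cases huv : u = v
        · subst huv
          by_cases h : c u = c w <;> simp [hT, h, hvw]
        · by_cases h : c v = c w <;> simp [hT, huv, h]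
      have hS' : (G.neighborFinset w).filter (fun u => c' u = c' w)
          = if j = c w then insert v T else T := by
        ext u
        by_cases huv : u = v
        · subst huv
          by_cases h : j = c w <;>
            simp [hT, hc', Function.update_self, Function.update_of_ne hwv, h, hvw]
        · by_cases h : j = c w <;>
            simp [hT, hc', Function.update_of_ne huv, Function.update_of_ne hwv, huv, h]
      rw [hS, hS']
      by_cases h1 : c v = c w <;> by_cases h2 : j = c w <;>
        simp [h1, h2, Finset.card_insert_of_notMem hvT]
    -- now sum up
    have hnbsub : G.neighborFinset v ⊆ Finset.univ.erase v := by
      intro w hw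
      exact Finset.mem_erase.mpr ⟨by rintro rfl; exact hvnot hw, Finset.mem_univ w⟩
    have hsum_split : ∀ (g : V → ℕ), ∑ w, g w
        = g v + ∑ w ∈ G.neighborFinset v, g w
          + ∑ w ∈ (Finset.univ.erase v) \ G.neighborFinset v, g w := by
      intro g
      have h1 : ∑ w ∈ Finset.univ.erase v, g w
          = ∑ w ∈ (Finset.univ.erase v) \ G.neighborFinset v, g w
            + ∑ w ∈ G.neighborFinset v, g w := (Finset.sum_sdiff hnbsub).symm
      have h2 : ∑ w : V, g w = g v + ∑ w ∈ Finset.univ.erase v, g w :=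
        (Finset.add_sum_erase _ g (Finset.mem_univ v)).symm
      rw [h2, h1]
      ring
    have hindA : ∑ w ∈ G.neighborFinset v, (if c v = c w then 1 else 0) = A := by
      rw [hAdef, Finset.card_filter]
      exact Finset.sum_congr rfl fun w _ => if_congr eq_comm rfl rfl
    have hindA' : ∑ w ∈ G.neighborFinset v, (if j = c w then 1 else 0) = A' := by
      rw [hA'def, Finset.card_filter]
      exact Finset.sum_congr rfl fun w _ => if_congr eq_comm rfl rfl
    have e1 := hsum_split (fun w => ((G.neighborFinset w).filter (fun u => c' u = c' w)).card)
    have e2 := hsum_split (fun w => ((G.neighborFinset w).filter (fun u => c u = c w)).card)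
    have efar : ∑ w ∈ (Finset.univ.erase v) \ G.neighborFinset v,
          ((G.neighborFinset w).filter (fun u => c' u = c' w)).card
        = ∑ w ∈ (Finset.univ.erase v) \ G.neighborFinset v,
          ((G.neighborFinset w).filter (fun u => c u = c w)).card := by
      apply Finset.sum_congr rfl
      intro w hw
      obtain ⟨hw1, hw2⟩ := Finset.mem_sdiff.mp hw
      exact hterm_far w (Finset.ne_of_mem_erase hw1) hw2
    have enb : ∑ w ∈ G.neighborFinset v,
          ((G.neighborFinset w).filter (fun u => c' u = c' w)).card + A
        = ∑ w ∈ G.neighborFinset v,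
          ((G.neighborFinset w).filter (fun u => c u = c w)).card + A' := by
      rw [← hindA, ← hindA', ← Finset.sum_add_distrib, ← Finset.sum_add_distrib]
      exact Finset.sum_congr rfl fun w hw => hterm_nb w hw
    rw [hF]
    simp only [e1, e2, efar, hterm_v]
    omega
  have hmin := hcmin c' (Finset.mem_univ c')
  omega

theorem locatableOnCols_of_maxDegree {V : Type*} [Fintype V] (G : SimpleGraph V)
    [DecidableRel G.Adj] (d : ℕ) (hd : 1 ≤ d) (h : G.maxDegree ≤ 2 ^ (d + 1) - 1) :
    LocatableOnCols G (d + 1) (2 ^ d) := by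
  classical
  set m := 2 ^ d with hmdef
  have hm : 2 ≤ m := by
    calc 2 = 2 ^ 1 := by norm_num
    _ ≤ 2 ^ d := Nat.pow_le_pow_right (by norm_num) hd
  have hΔ : ∀ v, G.degree v ≤ 2 * m - 1 := by
    intro v
    have h1 := G.degree_le_maxDegree v
    have : (2:ℕ) ^ (d+1) = 2 * m := by rw [hmdef, pow_succ]; ring
    omega
  obtain ⟨c, hc⟩ := exists_good_coloring G m hm hΔ
  -- partner function
  set S : V → Finset V := fun v => (G.neighborFinset v).filter (fun w => c w = c v) with hSdef
  set p : V → V := fun v => if h : (S v).Nonempty then h.choose else v with hpdef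
  have hp_spec : ∀ v, (S v).Nonempty → p v ∈ S v := by
    intro v hv
    simp only [hpdef, dif_pos hv]
    exact hv.choose_spec
  have hp_empty : ∀ v, ¬ (S v).Nonempty → p v = v := by
    intro v hv; simp only [hpdef, dif_neg hv]
  have hmemS : ∀ v w, w ∈ S v ↔ G.Adj v w ∧ c w = c v := by
    intro v w; simp [hSdef]
  have hp_unique : ∀ v w, w ∈ S v → p v = w := by
    intro v w hw
    have hne : (S v).Nonempty := ⟨w, hw⟩
    exact Finset.card_le_one.mp (hc v) _ (hp_spec v hne) _ hw
  have hp_ne : ∀ v, (S v).Nonempty → p v ≠ v := by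
    intro v hv heq
    have := hp_spec v hv
    rw [heq, hmemS] at this
    exact G.irrefl this.1
  have hp_invol : ∀ v, p v ≠ v → p (p v) = v := by
    intro v hv
    have hne : (S v).Nonempty := by
      by_contra hn; exact hv (hp_empty v hn)
    have hmem := (hmemS v (p v)).mp (hp_spec v hne)
    apply hp_unique
    rw [hmemS]
    exact ⟨hmem.1.symm, hmem.2.symm⟩
  -- height function
  set e : V → ℕ := fun v => (Fintype.equivFin V v : ℕ) with hedef
  have he_inj : Function.Injective e := by
    intro u v huv
    exact (Fintype.equivFin V).injective (Fin.val_injective huv)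
  set r : V → ℕ := fun v => min (e v) (e (p v)) with hrdef
  set hgt : V → ℤ := fun v => 2 * (r v : ℤ) + (if e v ≤ e (p v) then 0 else 1) with hhdef
  -- edge height property
  have hedge : ∀ u v, G.Adj u v → c u = c v →
      hgt v - hgt u = 1 ∨ hgt v - hgt u = -1 := by
    intro u v huv hcuv
    have hvS : v ∈ S u := (hmemS u v).mpr ⟨huv, hcuv.symm⟩
    have huS : u ∈ S v := (hmemS v u).mpr ⟨huv.symm, hcuv⟩
    have hpu : p u = v := hp_unique u v hvS
    have hpv : p v = u := hp_unique v u huS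
    have hne : e u ≠ e v := fun hh => (G.irrefl (v := u)) (he_inj hh ▸ huv)
    rcases lt_or_gt_of_ne hne with hlt | hlt
    · left
      simp only [hhdef, hrdef, hpu, hpv]
      rw [min_comm (e v) (e u)]
      have h1 : ¬ (e v ≤ e u) := not_le.mpr hlt
      rw [if_pos (le_of_lt hlt), if_neg h1]
      ring
    · right
      simp only [hhdef, hrdef, hpu, hpv]
      rw [min_comm (e v) (e u)]
      have h1 : ¬ (e u ≤ e v) := not_le.mpr hlt
      rw [if_neg h1, if_pos (le_of_lt hlt)]
      ring
  -- global injectivity of hgt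
  have hgt_inj : Function.Injective hgt := by
    intro u v huv
    simp only [hhdef] at huv
    by_cases h1 : e u ≤ e (p u) <;> by_cases h2 : e v ≤ e (p v)
    · rw [if_pos h1, if_pos h2] at huv
      have : r u = r v := by omega
      have : e u = e v := by
        simp only [hrdef, min_eq_left h1, min_eq_left h2] at this; exact this
      exact he_inj this
    · rw [if_pos h1, if_neg h2] at huv; omega
    · rw [if_neg h1, if_pos h2] at huv; omega
    · rw [if_neg h1, if_neg h2] at huv
      have hr : r u = r v := by omega
      have h1' : e (p u) < e u := not_le.mp h1
      have h2' : e (p v) < e v := not_le.mp h2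
      have hpe : e (p u) = e (p v) := by
        simp only [hrdef, min_eq_right (le_of_lt h1'), min_eq_right (le_of_lt h2')] at hr
        exact hr
      have hpp : p u = p v := he_inj hpe
      have hpu_ne : p u ≠ u := fun hh => by rw [hh] at h1'; omega
      have hpv_ne : p v ≠ v := fun hh => by rw [hh] at h2'; omega
      calc u = p (p u) := (hp_invol u hpu_ne).symm
      _ = p (p v) := by rw [hpp]
      _ = v := hp_invol v hpv_ne
  -- columns
  set col : Fin m → Fin d → ℤ := fun j k => ((j.val / 2 ^ (k : ℕ)) % 2 : ℕ) with hcoldef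
  have hcol01 : ∀ j k, col j k = 0 ∨ col j k = 1 := by
    intro j k
    have : j.val / 2 ^ (k:ℕ) % 2 < 2 := Nat.mod_lt _ (by norm_num)
    simp only [hcoldef]
    omega
  have hcol : ∀ j j' : Fin m, j ≠ j' →
      ∃ k, col j' k - col j k = 1 ∨ col j' k - col j k = -1 := by
    intro j j' hne
    by_contra hno
    push_neg at hno
    apply hne
    have hbit : ∀ k : Fin d, col j k = col j' k := by
      intro k
      have h1 := hno k
      rcases hcol01 j k with h2 | h2 <;> rcases hcol01 j' k with h3 | h3 <;> omega
    have : j.val = j'.val := by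
      apply Nat.eq_of_testBit_eq
      intro k
      by_cases hk : k < d
      · have := hbit ⟨k, hk⟩
        simp only [hcoldef, Nat.cast_inj] at this
        simp only [Nat.testBit_eq_decide_div_mod_eq]
        rw [this]
      · have hj : j.val < 2 ^ k :=
          lt_of_lt_of_le j.isLt (Nat.pow_le_pow_right (by norm_num) (by omega))
        have hj' : j'.val < 2 ^ k :=
          lt_of_lt_of_le j'.isLt (Nat.pow_le_pow_right (by norm_num) (by omega))
        rw [Nat.testBit_lt_two_pow hj, Nat.testBit_lt_two_pow hj']
    exact Fin.ext this
  -- the drawing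
  set φ : V → Fin (d+1) → ℤ := fun v => Fin.snoc (col (c v)) (hgt v) with hφdef
  have hφ_last : ∀ v, φ v (Fin.last d) = hgt v := by
    intro v; simp [hφdef]
  have hφ_cast : ∀ v (k : Fin d), φ v (Fin.castSucc k) = col (c v) k := by
    intro v k; simp [hφdef]
  have hφ_inj : Function.Injective φ := by
    intro u v huv
    apply hgt_inj
    rw [← hφ_last u, ← hφ_last v, huv]
  have hprim : ∀ u v, G.Adj u v → segGridPts (φ u) (φ v) = {φ u, φ v} := by
    intro u v huv
    by_cases hcc : c u = c v
    · exact segGridPts_eq_pair _ _ (Fin.last d) (by rw [hφ_last, hφ_last]; exact hedge u v huv hcc)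
    · obtain ⟨k, hk⟩ := hcol (c u) (c v) hcc
      exact segGridPts_eq_pair _ _ (Fin.castSucc k) (by rw [hφ_cast, hφ_cast]; exact hk)
  refine ⟨φ, ⟨⟨hφ_inj, ?_⟩, hprim⟩, ?_⟩
  · intro u v w huv hw
    have : φ w ∈ segGridPts (φ u) (φ v) := hw
    rw [hprim u v huv] at this
    rcases this with h | h
    · exact Or.inl (hφ_inj h)
    · exact Or.inr (hφ_inj h)
  · -- column count
    have hrank : ∀ v, rank (φ v) = fun i : Fin (d + 1 - 1) => col (c v) ⟨i.val, i.isLt⟩ := by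
      intro v
      funext i
      show φ v (Fin.castLE _ i) = _
      have : Fin.castLE (Nat.sub_le (d+1) 1) i = Fin.castSucc ⟨i.val, i.isLt⟩ := by
        apply Fin.ext; rfl
      rw [this, hφ_cast]
    have hsub : (Set.range fun v => rank (φ v)) ⊆
        Set.range (fun j : Fin m => fun i : Fin (d + 1 - 1) => col j ⟨i.val, i.isLt⟩) := by
      rintro x ⟨v, rfl⟩
      exact ⟨c v, (hrank v).symm⟩
    calc (Set.range fun v => rank (φ v)).ncard
        ≤ (Set.range (fun j : Fin m => fun i : Fin (d + 1 - 1) => col j ⟨i.val, i.isLt⟩)).ncard :=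
          Set.ncard_le_ncard hsub (Set.finite_range _)
      _ ≤ Fintype.card (Fin m) := by
          rw [← Set.image_univ, ← Finset.coe_univ, ← Finset.coe_image, Set.ncard_coe_finset]
          calc _ ≤ Finset.univ.card := Finset.card_image_le
          _ = Fintype.card (Fin m) := Finset.card_univ
      _ = 2 ^ d := by simp [hmdef]
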